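/- For any real P > 0 and any integer k ≥ 2, the per-user symmetric capacity under joint decoding strictly exceeds the worst-user rate under successive decoding: (1/k)·(1/2)·log(1 + kP) > (1/2)·log(1 + P/(1 + (k-1)P)). -/

import Mathlib

theorem jnn_beats_sic_first_order (P : ℝ) (hP : 0 < P) (k : ℕ) (hk : 2 ≤ k) :
    (1 / (k : ℝ)) * ((1 / 2) * Real.log (1 + (k : ℝ) * P)) >
      (1 / 2) * Real.log (1 + P / (1 + ((k : ℝ) - 1) * P)) := by
  set K : ℝ := (k : ℝ) with hKdef
  have hK2 : (2 : ℝ) ≤ K := by have := hk; exact_mod_cast Nat.cast_le.mpr hk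
  have hK0 : (0 : ℝ) < K := by linarith
  have hKne : K ≠ 0 := ne_of_gt hK0
  have hKP : 0 < K * P := mul_pos hK0 hP
  have hK1P : 0 < (K - 1) * P := mul_pos (by linarith) hP
  have hx : (0:ℝ) < 1 + K * P := by linarith
  have hy : (0:ℝ) < 1 + (K - 1) * P := by linarith
  -- strict concavity of log
  have key := strictConcaveOn_log_Ioi.2
    (Set.mem_Ioi.mpr one_pos) (Set.mem_Ioi.mpr hx)
    (show (1:ℝ) ≠ 1 + K * P by intro h; nlinarith)
    (show (0:ℝ) < 1 / K by positivity)
    (show (0:ℝ) < (K - 1) / K from div_pos (by linarith) hK0)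
    (show 1 / K + (K - 1) / K = 1 by field_simp; ring)
  have hcomb : (1 / K) • (1:ℝ) + ((K - 1) / K) • (1 + K * P) = 1 + (K - 1) * P := by
    simp only [smul_eq_mul]
    field_simp
    ring
  rw [hcomb, Real.log_one, smul_eq_mul, smul_eq_mul, mul_zero, zero_add] at key
  -- key : (K-1)/K * log (1 + K*P) < log (1 + (K-1)*P)
  have harg : 1 + P / (1 + (K - 1) * P) = (1 + K * P) / (1 + (K - 1) * P) := by
    rw [eq_div_iff (ne_of_gt hy), add_mul, div_mul_cancel₀ _ (ne_of_gt hy)]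
    ring
  rw [harg, Real.log_div (ne_of_gt hx) (ne_of_gt hy)]
  have hdiv : (K - 1) / K = 1 - 1 / K := by field_simp
  rw [hdiv] at key
  nlinarith [key, Real.log_pos (by linarith : 1 < 1 + K * P), one_div_pos.mpr hK0]
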